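/- For all natural numbers a, b, c, n, p, we have ∑_{k=0}^{n} C(a,k)·C(b,n−k)·C(k,c)·C(p−k, a+b−c) = C(p−n, a+b−n)·C(p−a, n−c)·C(a,c). -/

import Mathlib

/-- Binomial coefficient for integers: `C x y` is the usual binomial coefficient
when `0 ≤ y ≤ x`, and `0` otherwise. -/
def C (x y : ℤ) : ℤ := if 0 ≤ y ∧ y ≤ x then (x.toNat.choose y.toNat : ℤ) else 0

open Finset

lemma C_zero_of_neg {x y : ℤ} (h : y < 0) : C x y = 0 := by
  unfold C; rw [if_neg (by omega)]

lemma C_zero_of_lt {x y : ℤ} (h : x < y) : C x y = 0 := by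
  unfold C; rw [if_neg (by omega)]

lemma C_ne_zero_cond {x y : ℤ} (h : C x y ≠ 0) : 0 ≤ y ∧ y ≤ x := by
  unfold C at h
  split_ifs at h with h1
  · exact h1
  · exact absurd rfl h

lemma C_eq_choose {x : ℤ} (hx : 0 ≤ x) (j : ℕ) : C x j = (x.toNat.choose j : ℤ) := by
  unfold C
  split_ifs with h
  · norm_num
  · have : x.toNat < j := by omega
    rw [Nat.choose_eq_zero_of_lt this]; simp

lemma C_trinomial (x y z : ℤ) : C x y * C y z = C x z * C (x - z) (y - z) := by
  by_cases h : 0 ≤ z ∧ z ≤ y ∧ y ≤ x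
  · obtain ⟨h1, h2, h3⟩ := h
    unfold C
    rw [if_pos (by omega), if_pos (by omega), if_pos (by omega), if_pos (by omega)]
    have key := Nat.choose_mul (n := x.toNat) (show z.toNat ≤ y.toNat by omega)
    rw [show (x - z).toNat = x.toNat - z.toNat by omega,
      show (y - z).toNat = y.toNat - z.toNat by omega]
    exact_mod_cast key
  · unfold C
    split_ifs
    all_goals try ring
    all_goals exfalso; omega

lemma C_symm (x y : ℤ) : C x y = C x (x - y) := by
  unfold C
  split_ifs with h1 h2 h2
  · rw [show (x - y).toNat = x.toNat - y.toNat by omega]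
    have := Nat.choose_symm (show y.toNat ≤ x.toNat by omega)
    exact_mod_cast this.symm
  · omega
  · omega
  · rfl

lemma vand_core (x y : ℤ) (hx : 0 ≤ x) (hy : 0 ≤ y) (N : ℕ) :
    ∑ j ∈ range (N + 1), C x j * C y ((N : ℤ) - j) = C (x + y) N := by
  have h := Nat.add_choose_eq x.toNat y.toNat N
  rw [Finset.Nat.sum_antidiagonal_eq_sum_range_succ_mk] at h
  rw [C_eq_choose (by omega) N, show (x + y).toNat = x.toNat + y.toNat by omega, h]
  push_cast
  refine Finset.sum_congr rfl fun j hj => ?_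
  have hjN : j ≤ N := by simp at hj; omega
  rw [C_eq_choose hx j, show (N : ℤ) - j = ((N - j : ℕ) : ℤ) by omega, C_eq_choose hy (N - j)]

lemma vand_base (x y : ℤ) (hx : 0 ≤ x) (hy : 0 ≤ y) (N : ℤ) (M : ℕ) (h : N ≤ M) :
    ∑ j ∈ range (M + 1), C x j * C y (N - j) = C (x + y) N := by
  rcases lt_or_ge N 0 with hN | hN
  · rw [C_zero_of_neg hN]
    refine Finset.sum_eq_zero fun j hj => ?_
    rw [C_zero_of_neg (show N - (j : ℤ) < 0 by omega), mul_zero]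
  · have hN' : N = (N.toNat : ℤ) := by omega
    rw [hN', ← vand_core x y hx hy N.toNat]
    refine (Finset.sum_subset (by gcongr <;> omega) fun j hj hj' => ?_).symm
    have : (N.toNat : ℤ) < j := by simp at hj hj'; omega
    rw [C_zero_of_neg (show (N.toNat : ℤ) - (j : ℤ) < 0 by omega), mul_zero]

lemma vand_right (x y : ℤ) (hx : 0 ≤ x) (hy : 0 ≤ y) (N : ℤ) (M : ℕ) (h : y ≤ M) :
    ∑ j ∈ range (M + 1), C x (N - j) * C y j = C (x + y) N := by
  rcases lt_or_ge N 0 with hN | hN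
  · rw [C_zero_of_neg hN]
    refine Finset.sum_eq_zero fun j hj => ?_
    rw [C_zero_of_neg (show N - (j : ℤ) < 0 by omega), zero_mul]
  · set N' := N.toNat with hN'def
    have hN' : N = (N' : ℤ) := by omega
    -- extend / restrict to range (N' + 1)
    have key : ∑ j ∈ range (N' + 1), C x (N - j) * C y j = C (x + y) N := by
      have := Finset.sum_range_reflect (fun j : ℕ => C x (N - j) * C y j) (N' + 1)
      rw [← this]
      rw [hN', ← vand_core x y hx hy N']
      refine Finset.sum_congr rfl fun j hj => ?_
      have hjN : j ≤ N' := by simp at hj; omega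
      have e1 : ((N' + 1 - 1 - j : ℕ) : ℤ) = (N' : ℤ) - j := by omega
      rw [e1, show (N' : ℤ) - ((N' : ℤ) - j) = (j : ℤ) by ring]
    rw [← key]
    rcases le_total M N' with hMN | hMN
    · refine Finset.sum_subset (by gcongr <;> omega) fun j hj hj' => ?_
      have : M < j := by simp at hj hj'; omega
      rw [C_zero_of_lt (show y < (j : ℤ) by omega), mul_zero]
    · refine (Finset.sum_subset (by gcongr <;> omega) fun j hj hj' => ?_).symm
      have : N' < j := by simp at hj hj'; omega
      rw [C_zero_of_neg (show N - (j : ℤ) < 0 by omega), zero_mul]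

lemma vand_shift (x y : ℤ) (hx : 0 ≤ x) (hy : 0 ≤ y) (s M : ℕ) (N : ℤ) (hN : N + s ≤ M) :
    ∑ k ∈ range (M + 1), C x ((k : ℤ) - s) * C y (N - ((k : ℤ) - s)) = C (x + y) N := by
  rcases lt_or_ge N 0 with hNneg | hNpos
  · rw [C_zero_of_neg hNneg]
    refine Finset.sum_eq_zero fun k hk => ?_
    rcases lt_or_ge ((k : ℤ) - s) 0 with h' | h'
    · rw [C_zero_of_neg h', zero_mul]
    · rw [C_zero_of_neg (show N - ((k : ℤ) - s) < 0 by omega), mul_zero]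
  · have hsM : s ≤ M + 1 := by omega
    rw [Finset.range_eq_Ico, ← Finset.sum_Ico_consecutive _ (Nat.zero_le s) hsM]
    have h1 : ∑ k ∈ Finset.Ico 0 s, C x ((k : ℤ) - s) * C y (N - ((k : ℤ) - s)) = 0 := by
      refine Finset.sum_eq_zero fun k hk => ?_
      have : k < s := by simp at hk; omega
      rw [C_zero_of_neg (show (k : ℤ) - s < 0 by omega), zero_mul]
    rw [h1, zero_add, Finset.sum_Ico_eq_sum_range]
    have hMs : M + 1 - s = (M - s) + 1 := by omega
    rw [hMs, ← vand_base x y hx hy N (M - s) (by omega)]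
    refine Finset.sum_congr rfl fun j hj => ?_
    rw [show ((s + j : ℕ) : ℤ) - s = (j : ℤ) by push_cast; ring]

theorem stmt_8 (a b c n p : ℕ) :
    ∑ k ∈ Finset.range (n + 1), C a k * C b ((n : ℤ) - k) * C k c * C ((p : ℤ) - k) ((a : ℤ) + b - c) = C ((p : ℤ) - n) ((a : ℤ) + b - n) * C ((p : ℤ) - a) ((n : ℤ) - c) * C a c := by
  rcases lt_or_ge p n with hpn | hpn
  · -- p < n : both sides vanish
    have hR : C ((p : ℤ) - n) ((a : ℤ) + b - n) = 0 := by
      rcases lt_or_ge ((a : ℤ) + b - n) 0 with h | h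
      · exact C_zero_of_neg h
      · exact C_zero_of_lt (by omega)
    rw [hR, zero_mul, zero_mul]
    refine Finset.sum_eq_zero fun k hk => ?_
    have hk' : k ≤ n := by simp at hk; omega
    by_contra hne
    obtain ⟨h123, h4⟩ := mul_ne_zero_iff.mp hne
    obtain ⟨h12, h3⟩ := mul_ne_zero_iff.mp h123
    obtain ⟨h1, h2⟩ := mul_ne_zero_iff.mp h12
    have c1 := C_ne_zero_cond h1
    have c2 := C_ne_zero_cond h2
    have c3 := C_ne_zero_cond h3
    have c4 := C_ne_zero_cond h4
    omega
  rcases lt_or_ge a c with hac | hac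
  · -- a < c : both sides vanish
    rw [C_zero_of_lt (show (a : ℤ) < (c : ℤ) by omega), mul_zero]
    refine Finset.sum_eq_zero fun k hk => ?_
    by_contra hne
    obtain ⟨h123, h4⟩ := mul_ne_zero_iff.mp hne
    obtain ⟨h12, h3⟩ := mul_ne_zero_iff.mp h123
    obtain ⟨h1, h2⟩ := mul_ne_zero_iff.mp h12
    have c1 := C_ne_zero_cond h1
    have c3 := C_ne_zero_cond h3
    omega
  -- main case : c ≤ a and n ≤ p
  calc ∑ k ∈ Finset.range (n + 1), C a k * C b ((n : ℤ) - k) * C k c * C ((p : ℤ) - k) ((a : ℤ) + b - c)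
      = ∑ k ∈ Finset.range (n + 1), ∑ i ∈ Finset.range (n + 1),
          C a k * C b ((n : ℤ) - k) * C k c *
            (C ((p : ℤ) - n) ((a : ℤ) + b - c - i) * C ((n : ℤ) - k) i) := by
        refine Finset.sum_congr rfl fun k hk => ?_
        have hk' : k ≤ n := by simp at hk; omega
        rw [← Finset.mul_sum]
        congr 1
        rw [show (p : ℤ) - k = ((p : ℤ) - n) + ((n : ℤ) - k) by ring,
          ← vand_right ((p : ℤ) - n) ((n : ℤ) - k) (by omega) (by omega)
            ((a : ℤ) + b - c) n (by omega)]
    _ = ∑ i ∈ Finset.range (n + 1),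
          C a c * (C ((p : ℤ) - n) ((a : ℤ) + b - c - i) * C b i *
            C ((a : ℤ) + b - c - i) ((n : ℤ) - c - i)) := by
        rw [Finset.sum_comm]
        refine Finset.sum_congr rfl fun i hi => ?_
        have step : ∀ k ∈ Finset.range (n + 1),
            C a k * C b ((n : ℤ) - k) * C k c *
              (C ((p : ℤ) - n) ((a : ℤ) + b - c - i) * C ((n : ℤ) - k) i)
            = (C ((p : ℤ) - n) ((a : ℤ) + b - c - i) * C a c * C b i) *
              (C ((a : ℤ) - c) ((k : ℤ) - c) *
                C ((b : ℤ) - i) (((n : ℤ) - c - i) - ((k : ℤ) - c))) := by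
          intro k hk
          have t1 := C_trinomial (a : ℤ) (k : ℤ) (c : ℤ)
          have t2 := C_trinomial (b : ℤ) ((n : ℤ) - k) (i : ℤ)
          have e1 : ((n : ℤ) - c - i) - ((k : ℤ) - c) = ((n : ℤ) - k) - i := by ring
          rw [e1]
          calc C a k * C b ((n : ℤ) - k) * C k c *
              (C ((p : ℤ) - n) ((a : ℤ) + b - c - i) * C ((n : ℤ) - k) i)
              = C ((p : ℤ) - n) ((a : ℤ) + b - c - i) *
                ((C a k * C k c) * (C b ((n : ℤ) - k) * C ((n : ℤ) - k) i)) := by ring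
            _ = C ((p : ℤ) - n) ((a : ℤ) + b - c - i) *
                ((C a c * C ((a : ℤ) - c) ((k : ℤ) - c)) *
                  (C b i * C ((b : ℤ) - i) (((n : ℤ) - k) - i))) := by rw [t1, t2]
            _ = (C ((p : ℤ) - n) ((a : ℤ) + b - c - i) * C a c * C b i) *
                (C ((a : ℤ) - c) ((k : ℤ) - c) * C ((b : ℤ) - i) (((n : ℤ) - k) - i)) := by
                  ring
        rw [Finset.sum_congr rfl step, ← Finset.mul_sum]
        rcases le_or_gt (i : ℤ) (b : ℤ) with hib | hib
        · rw [vand_shift ((a : ℤ) - c) ((b : ℤ) - i) (by omega) (by omega) c n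
            ((n : ℤ) - c - i) (by omega),
            show (a : ℤ) - c + ((b : ℤ) - i) = (a : ℤ) + b - c - i by ring]
          ring
        · rw [C_zero_of_lt hib]
          ring
    _ = ∑ i ∈ Finset.range (n + 1),
          C a c * C ((p : ℤ) - n) ((a : ℤ) + b - n) *
            (C b i * C ((p : ℤ) - a - b) (((n : ℤ) - c) - i)) := by
        refine Finset.sum_congr rfl fun i hi => ?_
        have s1 : C ((a : ℤ) + b - c - i) ((n : ℤ) - c - i)
            = C ((a : ℤ) + b - c - i) ((a : ℤ) + b - n) := by
          rw [C_symm ((a : ℤ) + b - c - i) ((n : ℤ) - c - i)]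
          congr 1
          ring
        have t3 := C_trinomial ((p : ℤ) - n) ((a : ℤ) + b - c - i) ((a : ℤ) + b - n)
        rw [s1]
        calc C a c * (C ((p : ℤ) - n) ((a : ℤ) + b - c - i) * C b i *
              C ((a : ℤ) + b - c - i) ((a : ℤ) + b - n))
            = C a c * C b i * (C ((p : ℤ) - n) ((a : ℤ) + b - c - i) *
              C ((a : ℤ) + b - c - i) ((a : ℤ) + b - n)) := by ring
          _ = C a c * C b i * (C ((p : ℤ) - n) ((a : ℤ) + b - n) *
              C (((p : ℤ) - n) - ((a : ℤ) + b - n))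
                (((a : ℤ) + b - c - i) - ((a : ℤ) + b - n))) := by rw [t3]
          _ = C a c * C ((p : ℤ) - n) ((a : ℤ) + b - n) *
              (C b i * C ((p : ℤ) - a - b) (((n : ℤ) - c) - i)) := by
                rw [show ((p : ℤ) - n) - ((a : ℤ) + b - n) = (p : ℤ) - a - b by ring,
                  show ((a : ℤ) + b - c - i) - ((a : ℤ) + b - n) = ((n : ℤ) - c) - i by ring]
                ring
    _ = C ((p : ℤ) - n) ((a : ℤ) + b - n) * C ((p : ℤ) - a) ((n : ℤ) - c) * C a c := by
        rw [← Finset.mul_sum]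
        rcases le_or_gt ((a : ℤ) + b) (p : ℤ) with hq | hq
        · rw [vand_base (b : ℤ) ((p : ℤ) - a - b) (by omega) (by omega)
            ((n : ℤ) - c) n (by omega),
            show (b : ℤ) + ((p : ℤ) - a - b) = (p : ℤ) - a by ring]
          ring
        · have h0 : C ((p : ℤ) - n) ((a : ℤ) + b - n) = 0 := by
            rcases lt_or_ge ((a : ℤ) + b - n) 0 with h | h
            · exact C_zero_of_neg h
            · exact C_zero_of_lt (by omega)
          rw [h0]
          ring
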